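/- For every real q with 0 < q < 1, every integer L ≥ 2 and every integer A, the q-trinomial coefficients satisfy the depth-two recurrence T^0(L,A) = q^{L−A} T^1(L−1, A−1) + T^0(L−1, A) + q^{L−1} T^1(L−1, A+1) + q^{L−1}(q^{L−1} − 1) T^0(L−2, A). -/

import Mathlib

open Finset

noncomputable section

/-- `(q)_k = ∏_{j=1}^k (1 - q^j)`. -/
def qPoch (q : ℝ) (k : ℕ) : ℝ := ∏ j ∈ Finset.range k, (1 - q ^ (j + 1))

/-- The Andrews–Baxter `q`-trinomial coefficient `T^n(L,A)`. -/
def qTri (q : ℝ) (n : ℤ) (L : ℕ) (A : ℤ) : ℝ :=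
  if |A| ≤ (L : ℤ) then
    ∑ j ∈ Finset.range (L + 1),
      if 0 ≤ (j : ℤ) + A ∧ 0 ≤ (L : ℤ) - 2 * j - A then
        q ^ ((j : ℤ) * ((j : ℤ) + A - n)) * qPoch q L /
          (qPoch q j * qPoch q (((j : ℤ) + A).toNat) * qPoch q (((L : ℤ) - 2 * j - A).toNat))
      else 0
  else 0

/-- Depth-two recurrence for `T^0`: for `0 < q < 1`, `L ≥ 2` and any integer `A`,
`T^0(L,A) = q^{L-A} T^1(L-1,A-1) + T^0(L-1,A) + q^{L-1} T^1(L-1,A+1)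
  + q^{L-1}(q^{L-1}-1) T^0(L-2,A)`. -/
def trm (q : ℝ) (n : ℤ) (L : ℕ) (A : ℤ) (j : ℕ) : ℝ :=
  if 0 ≤ (j : ℤ) + A ∧ 0 ≤ (L : ℤ) - 2 * j - A then
    q ^ ((j : ℤ) * ((j : ℤ) + A - n)) * qPoch q L /
      (qPoch q j * qPoch q (((j : ℤ) + A).toNat) * qPoch q (((L : ℤ) - 2 * j - A).toNat))
  else 0

lemma qPoch_succ (q : ℝ) (k : ℕ) : qPoch q (k+1) = qPoch q k * (1 - q ^ (k+1)) :=
  Finset.prod_range_succ _ _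

lemma qPoch_pos {q : ℝ} (hq0 : 0 < q) (hq1 : q < 1) (k : ℕ) : 0 < qPoch q k := by
  refine Finset.prod_pos fun j _ => ?_
  have : q ^ (j+1) < 1 := pow_lt_one₀ hq0.le hq1 (Nat.succ_ne_zero j)
  linarith

lemma trm_eq_zero {q : ℝ} {n : ℤ} {L : ℕ} {A : ℤ} {j : ℕ}
    (h : ¬(0 ≤ (j : ℤ) + A ∧ 0 ≤ (L : ℤ) - 2 * j - A)) : trm q n L A j = 0 := if_neg h

lemma qTri_eq_sum (q : ℝ) (n : ℤ) (L : ℕ) (A : ℤ) :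
    qTri q n L A = ∑ j ∈ Finset.range (L + 1), trm q n L A j := by
  unfold qTri trm
  split_ifs with h
  · rfl
  · symm
    refine Finset.sum_eq_zero fun j hj => ?_
    rw [Finset.mem_range] at hj
    rw [if_neg]
    rintro ⟨h1, h2⟩
    exact h (abs_le.mpr ⟨by omega, by omega⟩)

lemma one_sub_pow_ne {q : ℝ} (hq0 : 0 < q) (hq1 : q < 1) (k : ℕ) : (1:ℝ) - q ^ (k+1) ≠ 0 := by
  have : q ^ (k+1) < 1 := pow_lt_one₀ hq0.le hq1 (Nat.succ_ne_zero k)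
  linarith

set_option maxHeartbeats 2000000 in
lemma key_succ (q : ℝ) (hq0 : 0 < q) (hq1 : q < 1) (M j : ℕ) (A : ℤ) :
    trm q 0 (M+2) A (j+1)
      = q ^ (((M+2:ℕ) : ℤ) - A) * trm q 1 (M+1) (A-1) (j+1)
        + trm q 0 (M+1) A (j+1)
        + q ^ (M+1) * trm q 1 (M+1) (A+1) j
        + q ^ (M+1) * (q ^ (M+1) - 1) * trm q 0 M A j := by
  have hP : ∀ k, qPoch q k ≠ 0 := fun k => (qPoch_pos hq0 hq1 k).ne'
  have hne := one_sub_pow_ne hq0 hq1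
  unfold trm
  split_ifs with h1 h2 h3 h4 h5 <;> try omega
  -- case 1 : all conditions hold
  · obtain ⟨b, rfl⟩ : ∃ b : ℕ, A = (b:ℤ) - (j:ℕ) := ⟨((j:ℤ) + A).toNat, by omega⟩
    obtain ⟨c, hM⟩ : ∃ c : ℕ, M = j + b + c + 1 := ⟨M - j - b - 1, by omega⟩
    rw [show ((((j+1:ℕ)):ℤ) + ((b:ℤ) - (j:ℕ))).toNat = b + 1 by omega,
        show ((((M+2:ℕ)):ℤ) - 2*((j+1:ℕ):ℤ) - ((b:ℤ) - (j:ℕ))).toNat = c + 1 by omega,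
        show ((((j+1:ℕ)):ℤ) + ((b:ℤ) - (j:ℕ) - 1)).toNat = b by omega,
        show ((((M+1:ℕ)):ℤ) - 2*((j+1:ℕ):ℤ) - ((b:ℤ) - (j:ℕ) - 1)).toNat = c + 1 by omega,
        show ((((M+1:ℕ)):ℤ) - 2*((j+1:ℕ):ℤ) - ((b:ℤ) - (j:ℕ))).toNat = c by omega,
        show (((j:ℕ):ℤ) + ((b:ℤ) - (j:ℕ) + 1)).toNat = b + 1 by omega,
        show ((((M+1:ℕ)):ℤ) - 2*((j:ℕ):ℤ) - ((b:ℤ) - (j:ℕ) + 1)).toNat = c + 1 by omega,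
        show (((j:ℕ):ℤ) + ((b:ℤ) - (j:ℕ))).toNat = b by omega,
        show (((M:ℕ):ℤ) - 2*((j:ℕ):ℤ) - ((b:ℤ) - (j:ℕ))).toNat = c + 1 by omega]
    -- exponents
    rw [show (((j+1:ℕ)):ℤ) * ((((j+1:ℕ)):ℤ) + ((b:ℤ) - (j:ℕ)) - 0) = (((j+1)*(b+1) : ℕ) : ℤ) by
          push_cast; ring,
        show (((j+1:ℕ)):ℤ) * ((((j+1:ℕ)):ℤ) + ((b:ℤ) - (j:ℕ) - 1) - 1) = (((j+1)*b : ℕ) : ℤ) - ((j+1:ℕ):ℤ) by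
          push_cast; ring,
        show (((j:ℕ)):ℤ) * ((((j:ℕ)):ℤ) + ((b:ℤ) - (j:ℕ) + 1) - 1) = ((j*b : ℕ) : ℤ) by
          push_cast; ring,
        show (((j:ℕ)):ℤ) * ((((j:ℕ)):ℤ) + ((b:ℤ) - (j:ℕ)) - 0) = ((j*b : ℕ) : ℤ) by
          push_cast; ring,
        show (((M+2:ℕ)):ℤ) - ((b:ℤ) - (j:ℕ)) = ((2*j+c+3 : ℕ) : ℤ) by push_cast; omega,
        zpow_sub₀ hq0.ne']
    simp only [zpow_natCast]
    -- qPoch expansions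
    rw [show M+2 = M+1+1 by omega, qPoch_succ q (M+1), qPoch_succ q M,
        qPoch_succ q j, qPoch_succ q b, qPoch_succ q c,
        show M+1+1 = j+b+c+3 by omega, show M+1 = j+b+c+2 by omega]
    have hPj := hP j; have hPb := hP b; have hPc := hP c
    have hu1 := hne j; have hu2 := hne b; have hu3 := hne c
    set P1 : ℝ := qPoch q j with hs1
    set P2 : ℝ := qPoch q b with hs2
    set P3 : ℝ := qPoch q c with hs3
    set PM : ℝ := qPoch q M with hs4
    field_simp [hPj, hPb, hPc, hu1, hu2, hu3, hq0.ne']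
    ring
  -- case 2 : bZ ≥ 1, cZ = 0
  · obtain ⟨b, rfl⟩ : ∃ b : ℕ, A = (b:ℤ) - (j:ℕ) := ⟨((j:ℤ) + A).toNat, by omega⟩
    have hM : M = j + b := by omega
    rw [show ((((j+1:ℕ)):ℤ) + ((b:ℤ) - (j:ℕ))).toNat = b + 1 by omega,
        show ((((M+2:ℕ)):ℤ) - 2*((j+1:ℕ):ℤ) - ((b:ℤ) - (j:ℕ))).toNat = 0 by omega,
        show ((((j+1:ℕ)):ℤ) + ((b:ℤ) - (j:ℕ) - 1)).toNat = b by omega,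
        show ((((M+1:ℕ)):ℤ) - 2*((j+1:ℕ):ℤ) - ((b:ℤ) - (j:ℕ) - 1)).toNat = 0 by omega,
        show (((j:ℕ):ℤ) + ((b:ℤ) - (j:ℕ) + 1)).toNat = b + 1 by omega,
        show ((((M+1:ℕ)):ℤ) - 2*((j:ℕ):ℤ) - ((b:ℤ) - (j:ℕ) + 1)).toNat = 0 by omega,
        show (((j:ℕ):ℤ) + ((b:ℤ) - (j:ℕ))).toNat = b by omega,
        show (((M:ℕ):ℤ) - 2*((j:ℕ):ℤ) - ((b:ℤ) - (j:ℕ))).toNat = 0 by omega]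
    rw [show (((j+1:ℕ)):ℤ) * ((((j+1:ℕ)):ℤ) + ((b:ℤ) - (j:ℕ)) - 0) = (((j+1)*(b+1) : ℕ) : ℤ) by
          push_cast; ring,
        show (((j+1:ℕ)):ℤ) * ((((j+1:ℕ)):ℤ) + ((b:ℤ) - (j:ℕ) - 1) - 1) = (((j+1)*b : ℕ) : ℤ) - ((j+1:ℕ):ℤ) by
          push_cast; ring,
        show (((j:ℕ)):ℤ) * ((((j:ℕ)):ℤ) + ((b:ℤ) - (j:ℕ) + 1) - 1) = ((j*b : ℕ) : ℤ) by
          push_cast; ring,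
        show (((j:ℕ)):ℤ) * ((((j:ℕ)):ℤ) + ((b:ℤ) - (j:ℕ)) - 0) = ((j*b : ℕ) : ℤ) by
          push_cast; ring,
        show (((M+2:ℕ)):ℤ) - ((b:ℤ) - (j:ℕ)) = ((2*j+2 : ℕ) : ℤ) by push_cast; omega,
        zpow_sub₀ hq0.ne']
    simp only [zpow_natCast]
    rw [show M+2 = M+1+1 by omega, qPoch_succ q (M+1), qPoch_succ q M,
        qPoch_succ q j, qPoch_succ q b,
        show M+1+1 = j+b+2 by omega, show M+1 = j+b+1 by omega]
    have hPj := hP j; have hPb := hP b; have hP0 := hP 0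
    have hu1 := hne j; have hu2 := hne b
    set P1 : ℝ := qPoch q j with hs1
    set P2 : ℝ := qPoch q b with hs2
    set P0 : ℝ := qPoch q 0 with hs3
    set PM : ℝ := qPoch q M with hs4
    field_simp [hPj, hPb, hP0, hu1, hu2, hq0.ne']
    ring
  -- case 3 : bZ = 0, cZ ≥ 1
  · obtain rfl : A = -(j:ℤ) - 1 := by omega
    obtain ⟨c, hM⟩ : ∃ c : ℕ, M = j + c := ⟨M - j, by omega⟩
    rw [show ((((j+1:ℕ)):ℤ) + (-(j:ℤ) - 1)).toNat = 0 by omega,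
        show ((((M+2:ℕ)):ℤ) - 2*((j+1:ℕ):ℤ) - (-(j:ℤ) - 1)).toNat = c + 1 by omega,
        show ((((M+1:ℕ)):ℤ) - 2*((j+1:ℕ):ℤ) - (-(j:ℤ) - 1)).toNat = c by omega,
        show (((j:ℕ):ℤ) + (-(j:ℤ) - 1 + 1)).toNat = 0 by omega,
        show ((((M+1:ℕ)):ℤ) - 2*((j:ℕ):ℤ) - (-(j:ℤ) - 1 + 1)).toNat = c + 1 by omega]
    rw [show (((j+1:ℕ)):ℤ) * ((((j+1:ℕ)):ℤ) + (-(j:ℤ) - 1) - 0) = ((0 : ℕ) : ℤ) by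
          push_cast; ring,
        show (((j:ℕ)):ℤ) * ((((j:ℕ)):ℤ) + (-(j:ℤ) - 1 + 1) - 1) = ((0 : ℕ) : ℤ) - ((j:ℕ) : ℤ) by
          push_cast; ring,
        zpow_sub₀ hq0.ne']
    simp only [zpow_natCast]
    rw [show M+2 = M+1+1 by omega, qPoch_succ q (M+1), qPoch_succ q M,
        qPoch_succ q j, qPoch_succ q c,
        show M+1+1 = j+c+2 by omega, show M+1 = j+c+1 by omega]
    have hPj := hP j; have hPc := hP c; have hP0 := hP 0
    have hu1 := hne j; have hu3 := hne c
    set P1 : ℝ := qPoch q j with hs1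
    set P3 : ℝ := qPoch q c with hs2
    set P0 : ℝ := qPoch q 0 with hs3
    set PM : ℝ := qPoch q M with hs4
    field_simp [hPj, hPc, hP0, hu1, hu3, hq0.ne']
    rw [show (-(j:ℤ) - 1) = -((j+1:ℕ):ℤ) by push_cast; ring,
      show ((0:ℕ):ℤ) - (j:ℤ) = -((j:ℕ):ℤ) by push_cast; ring]
    simp only [zpow_neg, zpow_natCast]
    field_simp
    ring
  -- case 4 : bZ = 0, cZ = 0
  · obtain rfl : A = -(j:ℤ) - 1 := by omega
    obtain rfl : j = M + 1 := by omega
    rw [show ((((M+1+1:ℕ)):ℤ) + (-((M+1:ℕ):ℤ) - 1)).toNat = 0 by omega,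
        show ((((M+2:ℕ)):ℤ) - 2*((M+1+1:ℕ):ℤ) - (-((M+1:ℕ):ℤ) - 1)).toNat = 0 by push_cast; omega,
        show ((((M+1:ℕ):ℤ)) + (-((M+1:ℕ):ℤ) - 1 + 1)).toNat = 0 by omega,
        show ((((M+1:ℕ)):ℤ) - 2*((M+1:ℕ):ℤ) - (-((M+1:ℕ):ℤ) - 1 + 1)).toNat = 0 by omega]
    rw [show (((M+1+1:ℕ)):ℤ) * ((((M+1+1:ℕ)):ℤ) + (-((M+1:ℕ):ℤ) - 1) - 0) = ((0 : ℕ) : ℤ) by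
          push_cast; ring,
        show (((M+1:ℕ)):ℤ) * ((((M+1:ℕ)):ℤ) + (-((M+1:ℕ):ℤ) - 1 + 1) - 1) = ((0 : ℕ) : ℤ) - ((M+1:ℕ) : ℤ) by
          push_cast; ring,
        zpow_sub₀ hq0.ne']
    simp only [zpow_natCast]
    rw [show M+1+1 = M+2 by omega]
    have hPM2 := hP (M+2); have hPM1 := hP (M+1); have hP0 := hP 0
    field_simp [hPM2, hPM1, hP0, hq0.ne']
    rw [show (-((M+1:ℕ):ℤ) - 1) = -((M+2:ℕ):ℤ) by push_cast; ring,
      show ((0:ℕ):ℤ) - ((M+1:ℕ):ℤ) = -((M+1:ℕ):ℤ) by push_cast; ring]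
    simp only [zpow_neg, zpow_natCast]
    field_simp
    ring
  -- case 5 : everything vanishes
  · simp

set_option maxHeartbeats 1000000 in
lemma key_zero (q : ℝ) (hq0 : 0 < q) (hq1 : q < 1) (M : ℕ) (A : ℤ) :
    trm q 0 (M+2) A 0
      = q ^ (((M+2:ℕ) : ℤ) - A) * trm q 1 (M+1) (A-1) 0
        + trm q 0 (M+1) A 0 := by
  have hP : ∀ k, qPoch q k ≠ 0 := fun k => (qPoch_pos hq0 hq1 k).ne'
  have hne := one_sub_pow_ne hq0 hq1
  unfold trm
  split_ifs with h1 h2 h3 <;> try omega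
  -- case 1 : 1 ≤ A ≤ M+1
  · obtain ⟨b, rfl⟩ : ∃ b : ℕ, A = (b:ℤ) + 1 := ⟨(A-1).toNat, by omega⟩
    obtain ⟨c, hM⟩ : ∃ c : ℕ, M = b + c := ⟨M - b, by omega⟩
    rw [show (((0:ℕ):ℤ) + ((b:ℤ) + 1)).toNat = b + 1 by omega,
        show ((((M+2:ℕ)):ℤ) - 2*((0:ℕ):ℤ) - ((b:ℤ) + 1)).toNat = c + 1 by omega,
        show (((0:ℕ):ℤ) + ((b:ℤ) + 1 - 1)).toNat = b by omega,
        show ((((M+1:ℕ)):ℤ) - 2*((0:ℕ):ℤ) - ((b:ℤ) + 1 - 1)).toNat = c + 1 by omega,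
        show ((((M+1:ℕ)):ℤ) - 2*((0:ℕ):ℤ) - ((b:ℤ) + 1)).toNat = c by omega]
    rw [show ((0:ℕ):ℤ) * (((0:ℕ):ℤ) + ((b:ℤ) + 1) - 0) = ((0:ℕ) : ℤ) by push_cast; ring,
        show ((0:ℕ):ℤ) * (((0:ℕ):ℤ) + ((b:ℤ) + 1 - 1) - 1) = ((0:ℕ) : ℤ) by push_cast; ring,
        show (((M+2:ℕ)):ℤ) - ((b:ℤ) + 1) = ((c+1 : ℕ) : ℤ) by push_cast; omega]
    simp only [zpow_natCast]
    rw [show M+2 = M+1+1 by omega, qPoch_succ q (M+1), qPoch_succ q M,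
        qPoch_succ q b, qPoch_succ q c,
        show M+1+1 = b+c+2 by omega, show M+1 = b+c+1 by omega]
    have hPb := hP b; have hPc := hP c; have hP0 := hP 0
    have hu2 := hne b; have hu3 := hne c
    set P2 : ℝ := qPoch q b with hs2
    set P3 : ℝ := qPoch q c with hs3
    set P0 : ℝ := qPoch q 0 with hs0
    set PM : ℝ := qPoch q M with hs4
    field_simp [hPb, hPc, hP0, hu2, hu3, hq0.ne']
    ring
  -- case 2 : A = M+2
  · obtain rfl : A = ((M+2:ℕ) : ℤ) := by omega
    rw [show (((0:ℕ):ℤ) + ((M+2:ℕ):ℤ)).toNat = M + 2 by omega,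
        show ((((M+2:ℕ)):ℤ) - 2*((0:ℕ):ℤ) - ((M+2:ℕ):ℤ)).toNat = 0 by omega,
        show (((0:ℕ):ℤ) + (((M+2:ℕ):ℤ) - 1)).toNat = M + 1 by omega,
        show ((((M+1:ℕ)):ℤ) - 2*((0:ℕ):ℤ) - (((M+2:ℕ):ℤ) - 1)).toNat = 0 by omega]
    rw [show ((0:ℕ):ℤ) * (((0:ℕ):ℤ) + ((M+2:ℕ):ℤ) - 0) = ((0:ℕ) : ℤ) by push_cast; ring,
        show ((0:ℕ):ℤ) * (((0:ℕ):ℤ) + (((M+2:ℕ):ℤ) - 1) - 1) = ((0:ℕ) : ℤ) by push_cast; ring,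
        show (((M+2:ℕ)):ℤ) - ((M+2:ℕ):ℤ) = ((0 : ℕ) : ℤ) by push_cast; ring]
    simp only [zpow_natCast]
    have hPM2 := hP (M+2); have hPM1 := hP (M+1); have hP0 := hP 0
    field_simp [hPM2, hPM1, hP0]
    ring
  -- case 3 : A = 0
  · obtain rfl : A = 0 := by omega
    rw [show (((0:ℕ):ℤ) + (0:ℤ)).toNat = 0 by omega,
        show ((((M+2:ℕ)):ℤ) - 2*((0:ℕ):ℤ) - (0:ℤ)).toNat = M + 2 by omega,
        show ((((M+1:ℕ)):ℤ) - 2*((0:ℕ):ℤ) - (0:ℤ)).toNat = M + 1 by omega]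
    rw [show ((0:ℕ):ℤ) * (((0:ℕ):ℤ) + (0:ℤ) - 0) = ((0:ℕ) : ℤ) by norm_num]
    simp only [zpow_natCast]
    have hPM2 := hP (M+2); have hPM1 := hP (M+1); have hP0 := hP 0
    field_simp [hPM2, hPM1, hP0]
    ring
  -- case 4 : vanishing
  · simp

theorem qTri_depth_two_recurrence_zero (q : ℝ) (hq0 : 0 < q) (hq1 : q < 1)
    (L : ℕ) (hL : 2 ≤ L) (A : ℤ) :
    qTri q 0 L A
      = q ^ ((L : ℤ) - A) * qTri q 1 (L - 1) (A - 1)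
        + qTri q 0 (L - 1) A
        + q ^ ((L : ℤ) - 1) * qTri q 1 (L - 1) (A + 1)
        + q ^ ((L : ℤ) - 1) * (q ^ ((L : ℤ) - 1) - 1) * qTri q 0 (L - 2) A := by
  obtain ⟨M, rfl⟩ : ∃ M, L = M + 2 := ⟨L - 2, by omega⟩
  rw [show M+2-1 = M+1 by omega, show M+2-2 = M by omega]
  rw [show q ^ ((((M+2:ℕ)):ℤ) - 1) = q ^ (M+1) by
    rw [show (((M+2:ℕ)):ℤ) - 1 = ((M+1:ℕ):ℤ) by push_cast; ring, zpow_natCast]]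
  simp only [qTri_eq_sum]
  have hz1 : trm q 1 (M+1) (A-1) (M+2) = 0 := trm_eq_zero (by rintro ⟨u, v⟩; omega)
  have hz2 : trm q 0 (M+1) A (M+2) = 0 := trm_eq_zero (by rintro ⟨u, v⟩; omega)
  have hz4 : trm q 0 M A (M+1) = 0 := trm_eq_zero (by rintro ⟨u, v⟩; omega)
  rw [show M+1+1 = M+2 by omega]
  have hT1ext : ∑ j ∈ Finset.range (M+2+1), trm q 1 (M+1) (A-1) j
      = ∑ j ∈ Finset.range (M+2), trm q 1 (M+1) (A-1) j := by
    rw [Finset.sum_range_succ, hz1, add_zero]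
  have hT2ext : ∑ j ∈ Finset.range (M+2+1), trm q 0 (M+1) A j
      = ∑ j ∈ Finset.range (M+2), trm q 0 (M+1) A j := by
    rw [Finset.sum_range_succ, hz2, add_zero]
  have hT4ext : ∑ j ∈ Finset.range (M+2), trm q 0 M A j
      = ∑ j ∈ Finset.range (M+1), trm q 0 M A j := by
    rw [show M+2 = M+1+1 by omega, Finset.sum_range_succ, hz4, add_zero]
  rw [← hT1ext, ← hT2ext, ← hT4ext]
  rw [Finset.sum_range_succ' (fun j => trm q 0 (M+2) A j) (M+2),
      Finset.sum_range_succ' (fun j => trm q 1 (M+1) (A-1) j) (M+2),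
      Finset.sum_range_succ' (fun j => trm q 0 (M+1) A j) (M+2)]
  have hsum : ∑ i ∈ Finset.range (M+2), trm q 0 (M+2) A (i+1)
      = ∑ i ∈ Finset.range (M+2),
          (q ^ ((((M+2:ℕ)):ℤ) - A) * trm q 1 (M+1) (A-1) (i+1)
            + trm q 0 (M+1) A (i+1)
            + q ^ (M+1) * trm q 1 (M+1) (A+1) i
            + q ^ (M+1) * (q ^ (M+1) - 1) * trm q 0 M A i) :=
    Finset.sum_congr rfl (fun i _ => key_succ q hq0 hq1 M i A)
  rw [hsum, key_zero q hq0 hq1 M A]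
  simp only [Finset.sum_add_distrib, Finset.mul_sum, mul_add]
  ring
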